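/- Let L ∈ R[x][∂] have positive order and be R-primitive, and let p be a non-unit element of R dividing lc_∂(L). Then p is non-removable from L: there is no operator P ∈ Q_R(x)[∂] of any order k such that PL ∈ R[x][∂] and σ^{-k}(lc_∂(PL)) = (w/(vp))·lc_∂(L) with w, v ∈ R[x] and gcd(p, w) = 1. -/

import Mathlib

open Polynomial

noncomputable section

/-- `Q_R(x)`, the field of rational functions over the fraction field `Q_R` of `R`,
realized as the fraction field of `R[x]`. -/
abbrev QX (R : Type) [CommRing R] [IsDomain R] := FractionRing (Polynomial R)

/-- Data of an Ore algebra `R[x][∂; σ, δ] ⊆ Q_R(x)[∂; σ, δ]`.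
The ring `A` plays the role of `Q_R(x)[∂]`; `ι` embeds the coefficient field,
`D` is the Ore variable `∂`, subject to the commutation rule `∂·p = σ(p)·∂ + δ(p)`,
and every element of `A` has a unique finite coefficient expansion `Σ ι(cᵢ)·∂^i`. -/
structure OreAlg (R : Type) [CommRing R] [IsDomain R] (A : Type) [Ring A] where
  σ : Polynomial R ≃+* Polynomial R
  σ_fix : ∀ r : R, σ (C r) = C r
  δ : Polynomial R → Polynomial R
  δ_add : ∀ f g, δ (f + g) = δ f + δ g
  δ_linear : ∀ (r : R) (f), δ (C r * f) = C r * δ f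
  ι : QX R →+* A
  ι_inj : Function.Injective ι
  D : A
  comm_rule : ∀ p : Polynomial R,
    D * ι (algebraMap (Polynomial R) (QX R) p)
      = ι (algebraMap (Polynomial R) (QX R) (σ p)) * D
        + ι (algebraMap (Polynomial R) (QX R) (δ p))
  δ_leibniz : ∀ f g, δ (f * g) = σ f * δ g + δ f * g
  coeff : A → ℕ → QX R
  coeff_inj : ∀ P Q : A, (∀ i, coeff P i = coeff Q i) → P = Q
  coeff_add : ∀ P Q i, coeff (P + Q) i = coeff P i + coeff Q i
  coeff_smul : ∀ (f : QX R) (P : A) (i), coeff (ι f * P) i = f * coeff P i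
  coeff_bdd : ∀ P : A, ∃ N, ∀ i, N < i → coeff P i = 0
  coeff_mk : ∀ (N : ℕ) (c : ℕ → QX R), (∀ i, N < i → c i = 0) →
    ∀ j, coeff (∑ i ∈ Finset.range (N + 1), ι (c i) * D ^ i) j = c j

namespace OreAlg

variable {R : Type} [CommRing R] [IsDomain R] {A : Type} [Ring A] (O : OreAlg R A)

/-- The embedding of `R[x]` into the Ore algebra. -/
def ιp (f : Polynomial R) : A := O.ι (algebraMap (Polynomial R) (QX R) f)

/-- The `i`-th `∂`-coefficient of `P` lies in `R[x]`. -/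
def PolyCoeff (P : A) (i : ℕ) : Prop :=
  ∃ f : Polynomial R, O.coeff P i = algebraMap (Polynomial R) (QX R) f

/-- `P` belongs to the subring `R[x][∂]` of `Q_R(x)[∂]`. -/
def InB (P : A) : Prop := ∀ i, O.PolyCoeff P i

/-- The order (degree in `∂`) of an operator. -/
def ord (P : A) : ℕ := sSup {i | O.coeff P i ≠ 0}

/-- The leading coefficient (with respect to `∂`), in `Q_R(x)`. -/
def lc (P : A) : QX R := O.coeff P (O.ord P)

/-- The contraction ideal `cont(L) = Q_R(x)[∂]·L ∩ R[x][∂]`. -/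
def cont (L : A) : Set A := {P | O.InB P ∧ ∃ Q : A, P = Q * L}

/-- The `k`-th submodule `M_k(L) = {P ∈ cont(L) : deg_∂ P ≤ k}`. -/
def M (L : A) (k : ℕ) : Set A := {P | P ∈ O.cont L ∧ O.ord P ≤ k}

/-- The `k`-th coefficient ideal `I_k = {[∂^k]P : P ∈ M_k} ∪ {0}` (as a set of
polynomials; `0` arises from `P = 0`). -/
def Icoeff (L : A) (k : ℕ) : Set (Polynomial R) :=
  {f | ∃ P ∈ O.M L k, O.coeff P k = algebraMap (Polynomial R) (QX R) f}

end OreAlg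

/-- `gcd(p, w) = 1` in `R[x]`: every common divisor is a unit. -/
def Copr {R : Type} [CommRing R] (p w : Polynomial R) : Prop :=
  ∀ d : Polynomial R, d ∣ p → d ∣ w → IsUnit d

namespace OreAlg

variable {R : Type} [CommRing R] [IsDomain R] {A : Type} [Ring A] (O : OreAlg R A)

/-- `P` is a `p`-removing operator for `L` over `R[x]`, of order `k`:
`P·L ∈ R[x][∂]` and `σ^{-k}(lc_∂(P·L)) = (w/(v·p))·lc_∂(L)` with `gcd(p, w) = 1`. -/
def IsRemoving (L : A) (p : Polynomial R) (k : ℕ) (P : A) : Prop :=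
  O.ord P = k ∧ O.InB (P * L) ∧
  ∃ w v t l : Polynomial R, v ≠ 0 ∧ Copr p w ∧
    O.lc (P * L) = algebraMap (Polynomial R) (QX R) t ∧
    O.lc L = algebraMap (Polynomial R) (QX R) l ∧
    (⇑O.σ.symm)^[k] t * (v * p) = w * l

/-- `p` is removable from `L` (at some order). -/
def Removable (L : A) (p : Polynomial R) : Prop :=
  ∃ k P, O.IsRemoving L p k P

/-- Factorization data for `lc_∂(L) = c·p₁^{e₁}⋯p_m^{e_m}`, with `c ∈ R` and the
`pᵢ ∈ R[x] \ R` irreducible and pairwise coprime; `L` has order `r > 0`. -/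
def Factored (L : A) (r m : ℕ) (c : R) (p : Fin m → Polynomial R)
    (e : Fin m → ℕ) : Prop :=
  O.ord L = r ∧ 0 < r ∧ c ≠ 0 ∧
  O.lc L = algebraMap (Polynomial R) (QX R) (C c * ∏ i, p i ^ e i) ∧
  (∀ i, Irreducible (p i) ∧ 0 < (p i).natDegree) ∧
  (∀ i j, i ≠ j → Copr (p i) (p j))

/-- `T` is a desingularized operator for `L`: `T ∈ cont(L)` and
`σ^{r-k}(lc_∂(T)) = (a/(b·∏ pᵢ^{kᵢ}))·lc_∂(L)` with `a, b ∈ R`, where each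
`pᵢ^{dᵢ}` with `dᵢ > kᵢ` is non-removable from `L`. -/
def Desing (L : A) (r m : ℕ) (c : R) (p : Fin m → Polynomial R)
    (e : Fin m → ℕ) (T : A) : Prop :=
  T ∈ O.cont L ∧ r ≤ O.ord T ∧
  ∃ (a b : R) (k : Fin m → ℕ) (t l : Polynomial R),
    b ≠ 0 ∧ (∀ i, k i ≤ e i) ∧
    O.lc T = algebraMap (Polynomial R) (QX R) t ∧
    O.lc L = algebraMap (Polynomial R) (QX R) l ∧
    (⇑O.σ.symm)^[O.ord T - r] t * (C b * ∏ i, p i ^ k i) = C a * l ∧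
    (∀ i (d : ℕ), k i < d → ¬ O.Removable L (p i ^ d))

/-- The left ideal of `R[x][∂]` generated by a set `S ⊆ R[x][∂]`. -/
def LIdeal (S : Set A) : Set A :=
  {P | ∃ (n : ℕ) (co s : Fin n → A), (∀ i, O.InB (co i)) ∧ (∀ i, s i ∈ S) ∧
    P = ∑ i, co i * s i}

/-- The constant `a ∈ R` viewed inside the Ore algebra. -/
def cst (a : R) : A := O.ιp (C a)

/-- The saturation `I : a^∞ = {P ∈ R[x][∂] : aⁱ·P ∈ I for some i}`. -/
def sat (I : Set A) (a : R) : Set A :=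
  {P | O.InB P ∧ ∃ i : ℕ, O.cst a ^ i * P ∈ I}

end OreAlg


namespace OreAlg

variable {R : Type} [CommRing R] [IsDomain R] {A : Type} [Ring A] (O : OreAlg R A)

lemma coeff_zero' (i : ℕ) : O.coeff 0 i = 0 := by
  have h := O.coeff_add 0 0 i
  rw [add_zero] at h
  exact (left_eq_add.mp h)

lemma bddAbove_support (P : A) : BddAbove {i | O.coeff P i ≠ 0} := by
  obtain ⟨N, hN⟩ := O.coeff_bdd P
  exact ⟨N, fun i hi => by
    by_contra h
    exact hi (hN i (lt_of_not_ge h))⟩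

lemma coeff_ord_lt {P : A} {j : ℕ} (h : O.ord P < j) : O.coeff P j = 0 := by
  by_contra hc
  exact absurd (le_csSup (O.bddAbove_support P) hc) (not_le.mpr h)

lemma coeff_ord_ne_zero {P : A} (h : P ≠ 0) : O.coeff P (O.ord P) ≠ 0 := by
  have hne : {i | O.coeff P i ≠ 0}.Nonempty := by
    by_contra h'
    rw [Set.not_nonempty_iff_eq_empty] at h'
    refine h (O.coeff_inj P 0 fun i => ?_)
    rw [O.coeff_zero']
    by_contra hc
    have : i ∈ {i | O.coeff P i ≠ 0} := hc
    rw [h'] at this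
    exact this
  exact Nat.sSup_mem hne (O.bddAbove_support P)

lemma ord_eq {P : A} {n : ℕ} (h1 : O.coeff P n ≠ 0) (h2 : ∀ j, n < j → O.coeff P j = 0) :
    O.ord P = n := by
  refine le_antisymm (csSup_le ⟨n, h1⟩ fun j hj => ?_) (le_csSup (O.bddAbove_support P) h1)
  by_contra hle
  exact hj (h2 j (lt_of_not_ge hle))

lemma coeff_sum (s : Finset ℕ) (f : ℕ → A) (j : ℕ) :
    O.coeff (∑ i ∈ s, f i) j = ∑ i ∈ s, O.coeff (f i) j := by
  classical
  induction s using Finset.induction_on with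
  | empty => simp [O.coeff_zero']
  | insert _ _ h ih => rw [Finset.sum_insert h, Finset.sum_insert h, O.coeff_add, ih]

lemma eq_sum (P : A) (N : ℕ) (h : ∀ j, N < j → O.coeff P j = 0) :
    P = ∑ i ∈ Finset.range (N + 1), O.ι (O.coeff P i) * O.D ^ i :=
  O.coeff_inj _ _ fun j => (O.coeff_mk N _ h j).symm

lemma delta_zero : O.δ 0 = 0 := by
  have h := O.δ_linear 0 0
  simpa using h

end OreAlg

/-- shift of a coefficient sequence -/
def shiftFun {R : Type} [CommRing R] (u : ℕ → Polynomial R) : ℕ → Polynomial R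
  | 0 => 0
  | j + 1 => u j

namespace OreAlg

variable {R : Type} [CommRing R] [IsDomain R] {A : Type} [Ring A] (O : OreAlg R A)

lemma coeff_D_mul (Q : A) (u : ℕ → Polynomial R)
    (hu : ∀ j, O.coeff Q j = algebraMap (Polynomial R) (QX R) (u j)) (j : ℕ) :
    O.coeff (O.D * Q) j
      = algebraMap (Polynomial R) (QX R) (O.σ (shiftFun u j) + O.δ (u j)) := by
  obtain ⟨N, hN⟩ := O.coeff_bdd Q
  have inj : Function.Injective (algebraMap (Polynomial R) (QX R)) :=
    IsFractionRing.injective _ _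
  have huN : ∀ i, N < i → u i = 0 := fun i hi => inj (by rw [← hu i, hN i hi, map_zero])
  have hc : ∀ i, N + 1 < i →
      (algebraMap (Polynomial R) (QX R) (O.σ (shiftFun u i) + O.δ (u i))) = 0 := by
    intro i hi
    match i, hi with
    | (i+1), hi =>
      have h1 : N < i := by omega
      show algebraMap (Polynomial R) (QX R) (O.σ (u i) + O.δ (u (i+1))) = 0
      rw [huN i h1, huN (i+1) (by omega)]
      simp [O.delta_zero]
  have hQ : Q = ∑ i ∈ Finset.range (N + 1),
      O.ι (algebraMap (Polynomial R) (QX R) (u i)) * O.D ^ i := by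
    refine O.coeff_inj _ _ fun i => ?_
    rw [O.coeff_mk N _ (fun i hi => by rw [huN i hi, map_zero]) i, hu i]
  have key : O.D * Q = ∑ i ∈ Finset.range (N + 1 + 1),
      O.ι (algebraMap (Polynomial R) (QX R) (O.σ (shiftFun u i) + O.δ (u i))) * O.D ^ i := by
    conv_lhs => rw [hQ]
    rw [Finset.mul_sum]
    have hterm : ∀ i, O.D * (O.ι (algebraMap (Polynomial R) (QX R) (u i)) * O.D ^ i)
        = O.ι (algebraMap (Polynomial R) (QX R) (O.σ (u i))) * O.D ^ (i+1)
          + O.ι (algebraMap (Polynomial R) (QX R) (O.δ (u i))) * O.D ^ i := by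
      intro i
      rw [← mul_assoc, O.comm_rule (u i), add_mul, mul_assoc, ← pow_succ']
    have hrhs : ∀ i, O.ι (algebraMap (Polynomial R) (QX R) (O.σ (shiftFun u i) + O.δ (u i)))
          * O.D ^ i
        = O.ι (algebraMap (Polynomial R) (QX R) (O.σ (shiftFun u i))) * O.D ^ i
          + O.ι (algebraMap (Polynomial R) (QX R) (O.δ (u i))) * O.D ^ i := by
      intro i
      rw [map_add, map_add, add_mul]
    calc ∑ i ∈ Finset.range (N + 1),
          O.D * (O.ι (algebraMap (Polynomial R) (QX R) (u i)) * O.D ^ i)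
        = (∑ i ∈ Finset.range (N + 1),
            O.ι (algebraMap (Polynomial R) (QX R) (O.σ (u i))) * O.D ^ (i+1))
          + ∑ i ∈ Finset.range (N + 1),
            O.ι (algebraMap (Polynomial R) (QX R) (O.δ (u i))) * O.D ^ i := by
          rw [← Finset.sum_add_distrib]
          exact Finset.sum_congr rfl fun i _ => hterm i
      _ = (∑ i ∈ Finset.range (N + 1 + 1),
            O.ι (algebraMap (Polynomial R) (QX R) (O.σ (shiftFun u i))) * O.D ^ i)
          + ∑ i ∈ Finset.range (N + 1 + 1),
            O.ι (algebraMap (Polynomial R) (QX R) (O.δ (u i))) * O.D ^ i := by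
          congr 1
          · rw [Finset.sum_range_succ' (fun i =>
              O.ι (algebraMap (Polynomial R) (QX R) (O.σ (shiftFun u i))) * O.D ^ i) (N+1)]
            show _ = _ + O.ι (algebraMap (Polynomial R) (QX R) (O.σ (0 : Polynomial R))) * O.D ^ 0
            rw [map_zero, map_zero, map_zero, zero_mul, add_zero]
            exact Finset.sum_congr rfl fun k _ => rfl
          · rw [Finset.sum_range_succ (fun i =>
              O.ι (algebraMap (Polynomial R) (QX R) (O.δ (u i))) * O.D ^ i) (N+1)]
            show _ = _ + O.ι (algebraMap (Polynomial R) (QX R) (O.δ (u (N+1)))) * O.D ^ (N+1)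
            rw [huN (N+1) (by omega), O.delta_zero, map_zero, map_zero, zero_mul, add_zero]
      _ = ∑ i ∈ Finset.range (N + 1 + 1),
            O.ι (algebraMap (Polynomial R) (QX R) (O.σ (shiftFun u i) + O.δ (u i))) * O.D ^ i := by
          rw [← Finset.sum_add_distrib]
          exact (Finset.sum_congr rfl fun i _ => (hrhs i)).symm
  rw [key, O.coeff_mk (N+1) _ hc j]

end OreAlg

/-- the coefficient array of `D^i * L` -/
def tau {R : Type} [CommRing R] [IsDomain R] {A : Type} [Ring A] (O : OreAlg R A)
    (pc : ℕ → Polynomial R) : ℕ → ℕ → Polynomial R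
  | 0, j => pc j
  | i + 1, j => O.σ (shiftFun (tau O pc i) j) + O.δ (tau O pc i j)

namespace OreAlg

variable {R : Type} [CommRing R] [IsDomain R] {A : Type} [Ring A] (O : OreAlg R A)

lemma coeff_D_pow_mul (L : A) (pc : ℕ → Polynomial R)
    (hpc : ∀ j, O.coeff L j = algebraMap (Polynomial R) (QX R) (pc j)) :
    ∀ i j, O.coeff (O.D ^ i * L) j = algebraMap (Polynomial R) (QX R) (tau O pc i j) := by
  intro i
  induction i with
  | zero => intro j; rw [pow_zero, one_mul]; exact hpc j
  | succ i ih =>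
    intro j
    have hpow : O.D ^ (i+1) * L = O.D * (O.D ^ i * L) := by rw [pow_succ', mul_assoc]
    rw [hpow, O.coeff_D_mul (O.D ^ i * L) (tau O pc i) ih j]
    rfl

lemma tau_eq_zero (pc : ℕ → Polynomial R) {r : ℕ} (hvan : ∀ j, r < j → pc j = 0) :
    ∀ i j, r + i < j → tau O pc i j = 0 := by
  intro i
  induction i with
  | zero => intro j hj; exact hvan j (by omega)
  | succ i ih =>
    intro j hj
    match j, hj with
    | (j+1), hj =>
      show O.σ (tau O pc i j) + O.δ (tau O pc i (j+1)) = 0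
      rw [ih j (by omega), ih (j+1) (by omega), map_zero, O.delta_zero, add_zero]

lemma tau_top (pc : ℕ → Polynomial R) {r : ℕ} (hvan : ∀ j, r < j → pc j = 0) :
    ∀ i, tau O pc i (r + i) = (⇑O.σ)^[i] (pc r) := by
  intro i
  induction i with
  | zero => rfl
  | succ i ih =>
    show O.σ (shiftFun (tau O pc i) (r + i + 1)) + O.δ (tau O pc i (r + i + 1)) = _
    rw [O.tau_eq_zero pc hvan i (r+i+1) (by omega), O.delta_zero, add_zero,
      Function.iterate_succ_apply']
    show O.σ (tau O pc i (r + i)) = _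
    rw [ih]

end OreAlg

namespace OreAlg

variable {R : Type} [CommRing R] [IsDomain R] {A : Type} [Ring A] (O : OreAlg R A)

lemma sigma_symm_C (a : R) : O.σ.symm (C a) = C a := by
  conv_lhs => rw [← O.σ_fix a]
  exact O.σ.symm_apply_apply _

lemma dvd_sigma {a : R} {f : Polynomial R} (h : C a ∣ f) : C a ∣ O.σ f := by
  obtain ⟨g, rfl⟩ := h
  exact ⟨O.σ g, by rw [map_mul, O.σ_fix]⟩

lemma dvd_sigma_iff {a : R} {f : Polynomial R} : C a ∣ O.σ f ↔ C a ∣ f := by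
  refine ⟨fun h => ?_, O.dvd_sigma⟩
  obtain ⟨g, hg⟩ := h
  have : f = C a * O.σ.symm g := by
    have := congrArg O.σ.symm hg
    rw [O.σ.symm_apply_apply, map_mul, O.sigma_symm_C] at this
    exact this
  exact ⟨_, this⟩

lemma dvd_delta {a : R} {f : Polynomial R} (h : C a ∣ f) : C a ∣ O.δ f := by
  obtain ⟨g, rfl⟩ := h
  exact ⟨O.δ g, O.δ_linear a g⟩

lemma dvd_iter_sigma_iff (a : R) (k : ℕ) (f : Polynomial R) :
    C a ∣ (⇑O.σ)^[k] f ↔ C a ∣ f := by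
  induction k with
  | zero => rfl
  | succ k ih => rw [Function.iterate_succ_apply', O.dvd_sigma_iff, ih]

lemma sigma_iter_mul (k : ℕ) (a b : Polynomial R) :
    (⇑O.σ)^[k] (a * b) = (⇑O.σ)^[k] a * (⇑O.σ)^[k] b := by
  induction k with
  | zero => rfl
  | succ k ih =>
    rw [Function.iterate_succ_apply', Function.iterate_succ_apply',
      Function.iterate_succ_apply', ih, map_mul]

lemma sigma_iter_ne_zero {k : ℕ} {f : Polynomial R} (h : f ≠ 0) : (⇑O.σ)^[k] f ≠ 0 := by
  intro hc
  have h0 : (⇑O.σ)^[k] (0 : Polynomial R) = 0 := Function.iterate_fixed (map_zero O.σ) k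
  exact h ((Function.Injective.iterate O.σ.injective k) (hc.trans h0.symm))

lemma tau_dvd_high (pc : ℕ → Polynomial R) {a : R} {J : ℕ}
    (hdvd : ∀ n, J < n → C a ∣ pc n) :
    ∀ i n, J + i < n → C a ∣ tau O pc i n := by
  intro i
  induction i with
  | zero => intro n hn; exact hdvd n (by omega)
  | succ i ih =>
    intro n hn
    match n, hn with
    | (n+1), hn =>
      show C a ∣ O.σ (tau O pc i n) + O.δ (tau O pc i (n+1))
      exact dvd_add (O.dvd_sigma (ih n (by omega))) (O.dvd_delta (ih (n+1) (by omega)))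

lemma tau_dvd_top (pc : ℕ → Polynomial R) {a : R} {J : ℕ}
    (hdvd : ∀ n, J < n → C a ∣ pc n) :
    ∀ i, C a ∣ (tau O pc i (J + i) - (⇑O.σ)^[i] (pc J)) := by
  intro i
  induction i with
  | zero =>
    show C a ∣ tau O pc 0 (J + 0) - pc J
    rw [Nat.add_zero]
    show C a ∣ pc J - pc J
    simp
  | succ i ih =>
    have h1 : tau O pc (i+1) (J + i + 1)
        = O.σ (tau O pc i (J + i)) + O.δ (tau O pc i (J + i + 1)) := rfl
    have h2 : J + (i + 1) = J + i + 1 := by omega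
    rw [h2, h1, Function.iterate_succ_apply']
    have : O.σ (tau O pc i (J + i)) + O.δ (tau O pc i (J + i + 1)) - O.σ ((⇑O.σ)^[i] (pc J))
        = O.σ (tau O pc i (J + i) - (⇑O.σ)^[i] (pc J)) + O.δ (tau O pc i (J + i + 1)) := by
      rw [map_sub]; ring
    rw [this]
    exact dvd_add (O.dvd_sigma ih) (O.dvd_delta (O.tau_dvd_high pc hdvd i (J+i+1) (by omega)))

end OreAlg

/-- if `L ∈ R[x][∂]` has positive order and is `R`-primitive, then
any non-unit `p ∈ R` dividing `lc_∂(L)` is non-removable from `L`: no operator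
`P ∈ Q_R(x)[∂]` of any order `k` satisfies `P·L ∈ R[x][∂]` and
`σ^{-k}(lc_∂(P·L)) = (w/(v·p))·lc_∂(L)` with `gcd(p, w) = 1`. -/
theorem constant_non_removable {R : Type} [CommRing R] [IsDomain R]
    [IsPrincipalIdealRing R] {A : Type} [Ring A] (O : OreAlg R A)
    (L : A) (hL : L ≠ 0) (hr : 0 < O.ord L)
    (pc : ℕ → Polynomial R)
    (hpc : ∀ i, O.coeff L i = algebraMap (Polynomial R) (QX R) (pc i))
    (hprim : ∀ s : R, (∀ i, C s ∣ pc i) → IsUnit s)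
    (p : R) (hpu : ¬ IsUnit p) (hpd : C p ∣ pc (O.ord L)) :
    ¬ O.Removable L (C p) := by
  rintro ⟨k, P, hordP, hInB, w, v, t, l, hv0, hcop, hlcN, hlcLeq, heq⟩
  classical
  have inj : Function.Injective (algebraMap (Polynomial R) (QX R)) :=
    IsFractionRing.injective _ _
  -- basic facts about L
  have hLtop : O.coeff L (O.ord L) ≠ 0 := O.coeff_ord_ne_zero hL
  have hl : l = pc (O.ord L) := by
    apply inj
    rw [← hpc, ← hlcLeq]
    rfl
  have hlne : l ≠ 0 := by
    intro h0
    exact hLtop (by rw [hpc, ← hl, h0, map_zero])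
  have hCpl : C p ∣ l := by rw [hl]; exact hpd
  have hwne : w ≠ 0 := by
    intro h0
    subst h0
    exact hpu (Polynomial.isUnit_C.mp (hcop (C p) dvd_rfl (dvd_zero _)))
  -- dispose of the case P = 0
  by_cases hP0 : P = 0
  · have ht0 : t = 0 := by
      apply inj
      rw [← hlcN, hP0, zero_mul, map_zero]
      exact O.coeff_zero' _
    rw [ht0, Function.iterate_fixed (map_zero O.σ.symm) k, zero_mul] at heq
    rcases mul_eq_zero.mp heq.symm with h | h
    · exact hwne h
    · exact hlne h
  -- main case
  have hck : O.coeff P k ≠ 0 := by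
    rw [← hordP]; exact O.coeff_ord_ne_zero hP0
  have hvan : ∀ j, O.ord L < j → pc j = 0 := fun j hj =>
    inj (by rw [← hpc j, O.coeff_ord_lt hj, map_zero])
  have hPsum : P = ∑ i ∈ Finset.range (k+1), O.ι (O.coeff P i) * O.D ^ i := by
    refine O.eq_sum P k fun j hj => O.coeff_ord_lt ?_
    rw [hordP]; exact hj
  have hNcoeff : ∀ j, O.coeff (P * L) j
      = ∑ i ∈ Finset.range (k+1),
          O.coeff P i * algebraMap (Polynomial R) (QX R) (tau O pc i j) := by
    intro j
    conv_lhs => rw [hPsum, Finset.sum_mul]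
    rw [O.coeff_sum]
    refine Finset.sum_congr rfl fun i _ => ?_
    rw [mul_assoc, O.coeff_smul, O.coeff_D_pow_mul L pc hpc i j]
  have hσl : (⇑O.σ)^[k] (pc (O.ord L)) ≠ 0 :=
    O.sigma_iter_ne_zero (by rw [← hl]; exact hlne)
  have htopval : O.coeff (P * L) (O.ord L + k)
      = O.coeff P k * algebraMap (Polynomial R) (QX R) ((⇑O.σ)^[k] (pc (O.ord L))) := by
    rw [hNcoeff]
    rw [Finset.sum_eq_single k
      (fun i hi hik => by
        rw [O.tau_eq_zero pc hvan i _
          (by have := Finset.mem_range.mp hi; omega), map_zero, mul_zero])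
      (fun hk => absurd (Finset.self_mem_range_succ k) hk),
      O.tau_top pc hvan k]
  have htopne : O.coeff (P * L) (O.ord L + k) ≠ 0 := by
    rw [htopval]
    exact mul_ne_zero hck ((map_ne_zero_iff _ inj).mpr hσl)
  have hhigh : ∀ j, O.ord L + k < j → O.coeff (P * L) j = 0 := by
    intro j hj
    rw [hNcoeff]
    refine Finset.sum_eq_zero fun i hi => ?_
    rw [O.tau_eq_zero pc hvan i j (by have := Finset.mem_range.mp hi; omega),
      map_zero, mul_zero]
  have hordN : O.ord (P * L) = O.ord L + k := O.ord_eq htopne hhigh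
  have ht : algebraMap (Polynomial R) (QX R) t
      = O.coeff P k * algebraMap (Polynomial R) (QX R) ((⇑O.σ)^[k] l) := by
    rw [← hlcN]
    show O.coeff (P * L) (O.ord (P * L)) = _
    rw [hordN, htopval, ← hl]
  have htne : t ≠ 0 := by
    intro h0
    rw [h0, map_zero] at ht
    exact mul_ne_zero hck
      ((map_ne_zero_iff _ inj).mpr (O.sigma_iter_ne_zero hlne)) ht.symm
  -- common denominator for the coefficients of P
  obtain ⟨g0, hg0⟩ := IsLocalization.exist_integer_multiples
    (nonZeroDivisors (Polynomial R)) (Finset.range (k+1)) (O.coeff P)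
  set g : Polynomial R := (g0 : Polynomial R) with hgdef
  have hgne : g ≠ 0 := nonZeroDivisors.coe_ne_zero g0
  have hbex : ∀ i, ∃ y : Polynomial R, i ∈ Finset.range (k+1) →
      algebraMap (Polynomial R) (QX R) y
        = algebraMap (Polynomial R) (QX R) g * O.coeff P i := by
    intro i
    by_cases hi : i ∈ Finset.range (k+1)
    · obtain ⟨y, hy⟩ := hg0 i hi
      exact ⟨y, fun _ => by rw [hy, Algebra.smul_def]⟩
    · exact ⟨0, fun h => absurd h hi⟩
  choose b hb using hbex
  have hbk : algebraMap (Polynomial R) (QX R) (b k)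
      = algebraMap (Polynomial R) (QX R) g * O.coeff P k :=
    hb k (Finset.self_mem_range_succ k)
  have hbkne : b k ≠ 0 := by
    intro h0
    rw [h0, map_zero] at hbk
    exact (mul_ne_zero ((map_ne_zero_iff _ inj).mpr hgne) hck) hbk.symm
  choose tf htf using hInB
  have hmaster : ∀ j, g * tf j = ∑ i ∈ Finset.range (k+1), b i * tau O pc i j := by
    intro j
    apply inj
    rw [map_mul, ← htf j, hNcoeff j, map_sum, Finset.mul_sum]
    refine Finset.sum_congr rfl fun i hi => ?_
    rw [map_mul, hb i hi]
    ring
  have hlead : g * t = b k * (⇑O.σ)^[k] l := by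
    apply inj
    rw [map_mul, map_mul, ht, hbk]
    ring
  -- a prime factor of p
  have hpne : p ≠ 0 := by
    intro h0
    exact hlne (zero_dvd_iff.mp (by rwa [h0, Polynomial.C_0] at hCpl))
  obtain ⟨q, hqirr, hqp⟩ := WfDvdMonoid.exists_irreducible_factor hpu hpne
  have hq : Prime q := UniqueFactorizationMonoid.irreducible_iff_prime.mp hqirr
  set π : Polynomial R := C q with hπdef
  have hπ : Prime π := Polynomial.prime_C_iff.mpr hq
  have hπu : ¬ IsUnit π := hπ.not_unit
  have hπCp : π ∣ C p := map_dvd (C : R →+* Polynomial R) hqp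
  have hw0 : ¬ π ∣ w := fun hd => hπu (hcop π hπCp hd)
  -- multiplicity facts
  have hfin : ∀ {f : Polynomial R}, f ≠ 0 → FiniteMultiplicity π f :=
    fun hf => FiniteMultiplicity.of_not_isUnit hπu hf
  have hνmul : ∀ {f h : Polynomial R}, f ≠ 0 → h ≠ 0 →
      multiplicity π (f * h) = multiplicity π f + multiplicity π h :=
    fun hf hh => multiplicity_mul hπ (hfin (mul_ne_zero hf hh))
  have hCpow : ∀ n : ℕ, (π : Polynomial R) ^ n = C (q ^ n) := fun n => (map_pow C q n).symm
  have hνσ : ∀ {f : Polynomial R}, f ≠ 0 →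
      multiplicity π ((⇑O.σ)^[k] f) = multiplicity π f := by
    intro f hf
    rw [(hfin (O.sigma_iter_ne_zero hf)).multiplicity_eq_iff]
    constructor
    · rw [hCpow, O.dvd_iter_sigma_iff, ← hCpow]
      exact pow_multiplicity_dvd π f
    · rw [hCpow, O.dvd_iter_sigma_iff, ← hCpow]
      exact (hfin hf).not_pow_dvd_of_multiplicity_lt (Nat.lt_succ_self _)
  -- transform the removing equation
  have hLI : Function.LeftInverse ⇑O.σ ⇑O.σ.symm := O.σ.apply_symm_apply
  have heq2 : t * ((⇑O.σ)^[k] v * C p) = (⇑O.σ)^[k] w * (⇑O.σ)^[k] l := by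
    have h1 := congrArg ((⇑O.σ)^[k]) heq
    rw [O.sigma_iter_mul, O.sigma_iter_mul, O.sigma_iter_mul, (hLI.iterate k) t,
      Function.iterate_fixed (O.σ_fix p) k] at h1
    exact h1
  have hνCp : 0 < multiplicity π (C p) := multiplicity_pos_of_dvd hπCp
  have hνw : multiplicity π w = 0 := multiplicity_eq_zero.mpr hw0
  have hvNe : (⇑O.σ)^[k] v ≠ 0 := O.sigma_iter_ne_zero hv0
  have hCpne : (C p : Polynomial R) ≠ 0 := Polynomial.C_ne_zero.mpr hpne
  have e1 : multiplicity π t + (multiplicity π v + multiplicity π (C p))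
      = multiplicity π w + multiplicity π l := by
    have h2 := congrArg (multiplicity π) heq2
    rw [hνmul htne (mul_ne_zero hvNe hCpne), hνmul hvNe hCpne,
      hνmul (O.sigma_iter_ne_zero hwne) (O.sigma_iter_ne_zero hlne),
      hνσ hwne, hνσ hlne, hνσ hv0] at h2
    exact h2
  have e2 : multiplicity π g + multiplicity π t
      = multiplicity π (b k) + multiplicity π l := by
    have h2 := congrArg (multiplicity π) hlead
    rw [hνmul hgne htne, hνmul hbkne (O.sigma_iter_ne_zero hlne), hνσ hlne] at h2
    exact h2
  -- minimal multiplicity among the b i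
  set F := (Finset.range (k+1)).filter (fun i => b i ≠ 0) with hFdef
  have hkF : k ∈ F := Finset.mem_filter.mpr ⟨Finset.self_mem_range_succ k, hbkne⟩
  obtain ⟨i0, hi0F, hmin⟩ := Finset.exists_min_image F (fun i => multiplicity π (b i)) ⟨k, hkF⟩
  obtain ⟨hi0r, hi0ne⟩ := Finset.mem_filter.mp hi0F
  set m := multiplicity π (b i0) with hmdef
  have hmbk : m ≤ multiplicity π (b k) := hmin k hkF
  have hdvdall : ∀ i ∈ Finset.range (k+1), π ^ m ∣ b i := by
    intro i hi
    by_cases h0 : b i = 0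
    · rw [h0]; exact dvd_zero _
    · exact (pow_dvd_pow π (hmin i (Finset.mem_filter.mpr ⟨hi, h0⟩))).trans
        (pow_multiplicity_dvd π (b i))
  have hbex2 : ∀ i, ∃ y, i ∈ Finset.range (k+1) → b i = π ^ m * y := by
    intro i
    by_cases hi : i ∈ Finset.range (k+1)
    · obtain ⟨y, hy⟩ := hdvdall i hi; exact ⟨y, fun _ => hy⟩
    · exact ⟨0, fun h => absurd h hi⟩
  choose b' hb' using hbex2
  have hb'i0 : ¬ π ∣ b' i0 := by
    rintro ⟨z, hz⟩
    have hdd : π ^ (m+1) ∣ b i0 := by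
      rw [hb' i0 hi0r, hz, pow_succ]
      exact ⟨z, by ring⟩
    exact (hfin hi0ne).not_pow_dvd_of_multiplicity_lt (Nat.lt_succ_self _) hdd
  -- the extremal indices
  set Sb : Set ℕ := {i | i ≤ k ∧ ¬ π ∣ b' i} with hSbdef
  have hSbne : Sb.Nonempty :=
    ⟨i0, ⟨by have := Finset.mem_range.mp hi0r; omega, hb'i0⟩⟩
  have hSbbdd : BddAbove Sb := ⟨k, fun i hi => hi.1⟩
  set ibar := sSup Sb with hibardef
  have hibar_mem : ibar ∈ Sb := Nat.sSup_mem hSbne hSbbdd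
  have hibark : ibar ≤ k := hibar_mem.1
  have hibar_not : ¬ π ∣ b' ibar := hibar_mem.2
  have hibar_hi : ∀ i, ibar < i → i ≤ k → π ∣ b' i := by
    intro i h1 h2
    by_contra hc
    exact absurd (le_csSup hSbbdd (⟨h2, hc⟩ : i ∈ Sb)) (not_le.mpr h1)
  set Sp : Set ℕ := {j | ¬ π ∣ pc j} with hSpdef
  have hSpne : Sp.Nonempty := by
    by_contra hc
    rw [Set.not_nonempty_iff_eq_empty] at hc
    refine hq.not_unit (hprim q fun i => ?_)
    by_contra hd
    have hmem : i ∈ Sp := hd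
    rw [hc] at hmem
    exact hmem
  have hSpbdd : BddAbove Sp := ⟨O.ord L, fun j hj => by
    by_contra hc
    exact hj (by rw [hvan j (lt_of_not_ge hc)]; exact dvd_zero _)⟩
  set jbar := sSup Sp with hjbardef
  have hjbar_not : ¬ π ∣ pc jbar := Nat.sSup_mem hSpne hSpbdd
  have hjbar_hi : ∀ n, jbar < n → π ∣ pc n := by
    intro n hn
    by_contra hc
    exact absurd (le_csSup hSpbdd (hc : n ∈ Sp)) (not_le.mpr hn)
  -- the Gauss coefficient
  set J := ibar + jbar with hJdef
  set S := ∑ i ∈ Finset.range (k+1), b' i * tau O pc i J with hSdef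
  have hibar_range : ibar ∈ Finset.range (k+1) := Finset.mem_range.mpr (by omega)
  have hSsub : π ∣ S - b' ibar * (⇑O.σ)^[ibar] (pc jbar) := by
    have hadd : b' ibar * tau O pc ibar J
        + ∑ i ∈ (Finset.range (k+1)).erase ibar, b' i * tau O pc i J = S := by
      conv_rhs => rw [hSdef]
      exact Finset.add_sum_erase (Finset.range (k+1)) (fun i => b' i * tau O pc i J) hibar_range
    have hsplit : S - b' ibar * (⇑O.σ)^[ibar] (pc jbar)
        = (∑ i ∈ (Finset.range (k+1)).erase ibar, b' i * tau O pc i J)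
          + b' ibar * (tau O pc ibar J - (⇑O.σ)^[ibar] (pc jbar)) := by
      rw [← hadd]; ring
    rw [hsplit]
    refine dvd_add (Finset.dvd_sum fun i hi => ?_) ?_
    · have hik := Finset.mem_range.mp (Finset.mem_of_mem_erase hi)
      have hine : i ≠ ibar := Finset.ne_of_mem_erase hi
      rcases lt_or_gt_of_ne hine with hlt | hgt
      · exact dvd_mul_of_dvd_right (O.tau_dvd_high pc hjbar_hi i J (by omega)) _
      · exact dvd_mul_of_dvd_left (hibar_hi i hgt (by omega)) _
    · have hJc : J = jbar + ibar := by omega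
      rw [hJc]
      exact dvd_mul_of_dvd_right (O.tau_dvd_top pc hjbar_hi ibar) _
  have hSnd : ¬ π ∣ S := by
    intro hS
    have hX : π ∣ b' ibar * (⇑O.σ)^[ibar] (pc jbar) := by
      have hd2 := dvd_sub hS hSsub
      rwa [sub_sub_cancel] at hd2
    rcases hπ.dvd_mul.mp hX with h | h
    · exact hibar_not h
    · rw [hπdef, O.dvd_iter_sigma_iff] at h
      exact hjbar_not h
  have hfac : g * tf J = π ^ m * S := by
    rw [hmaster J, hSdef, Finset.mul_sum]
    refine Finset.sum_congr rfl fun i hi => ?_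
    rw [hb' i hi, mul_assoc]
  have hgm : ¬ π ^ (m+1) ∣ g * tf J := by
    intro hdvd
    rw [hfac, pow_succ] at hdvd
    exact hSnd ((mul_dvd_mul_iff_left (pow_ne_zero m hπ.ne_zero)).mp hdvd)
  have hνg_le : multiplicity π g ≤ m := by
    by_contra hc
    push_neg at hc
    exact hgm (((pow_dvd_pow π hc).trans (pow_multiplicity_dvd π g)).trans
      (dvd_mul_right g (tf J)))
  omega
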